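/- For all positive integers m and L with L ≤ m, the number of set partitions of an m-element set into exactly L nonempty blocks, each block having even cardinality, is at most 2^m · L^{m − L}. -/

import Mathlib

open Finset

/-- The minimum of the block containing `x`. -/
noncomputable def s17lead {m : ℕ} (P : Finpartition (univ : Finset (Fin m))) (x : Fin m) :
    Fin m :=
  (P.part x).min' (P.nonempty_of_mem_parts (P.part_mem.2 (mem_univ x)))

lemma s17lead_mem_part {m : ℕ} (P : Finpartition (univ : Finset (Fin m))) (x : Fin m) :
    s17lead P x ∈ P.part x :=
  Finset.min'_mem _ _

lemma s17part_lead {m : ℕ} (P : Finpartition (univ : Finset (Fin m))) (x : Fin m) :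
    P.part (s17lead P x) = P.part x :=
  P.part_eq_of_mem (P.part_mem.2 (mem_univ x)) (s17lead_mem_part P x)

lemma s17min'_congr {α : Type*} [LinearOrder α] {s t : Finset α} (h : s = t)
    (hs : s.Nonempty) (ht : t.Nonempty) : s.min' hs = t.min' ht := by subst h; rfl

lemma s17lead_lead {m : ℕ} (P : Finpartition (univ : Finset (Fin m))) (x : Fin m) :
    s17lead P (s17lead P x) = s17lead P x := by
  simp only [s17lead]
  exact s17min'_congr (s17part_lead P x) _ _

lemma s17part_eq_of_lead_eq {m : ℕ} (P : Finpartition (univ : Finset (Fin m))) {x y : Fin m}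
    (h : s17lead P x = s17lead P y) : P.part x = P.part y := by
  refine P.eq_of_mem_parts (P.part_mem.2 (mem_univ x)) (P.part_mem.2 (mem_univ y))
    (s17lead_mem_part P x) ?_
  rw [h]; exact s17lead_mem_part P y

lemma s17mem_part_iff_lead {m : ℕ} (P : Finpartition (univ : Finset (Fin m))) (x y : Fin m) :
    y ∈ P.part x ↔ s17lead P y = s17lead P x := by
  constructor
  · intro hy
    have : P.part y = P.part x := P.part_eq_of_mem (P.part_mem.2 (mem_univ x)) hy
    simp only [s17lead, this]
  · intro h
    have := s17part_eq_of_lead_eq P h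
    rw [← this]
    exact P.mem_part (mem_univ y)

/-- The set of block minima. -/
noncomputable def s17mins {m : ℕ} (P : Finpartition (univ : Finset (Fin m))) :
    Finset (Fin m) :=
  univ.image (s17lead P)

lemma s17lead_mem_mins {m : ℕ} (P : Finpartition (univ : Finset (Fin m))) (x : Fin m) :
    s17lead P x ∈ s17mins P :=
  mem_image_of_mem _ (mem_univ x)

lemma s17lead_of_mem_mins {m : ℕ} (P : Finpartition (univ : Finset (Fin m))) {x : Fin m}
    (hx : x ∈ s17mins P) : s17lead P x = x := by
  obtain ⟨y, -, rfl⟩ := mem_image.1 hx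
  exact s17lead_lead P y

lemma s17mins_card {m : ℕ} (P : Finpartition (univ : Finset (Fin m))) :
    (s17mins P).card = P.parts.card := by
  refine Finset.card_bij (fun x _ => P.part x) (fun x _ => P.part_mem.2 (mem_univ x)) ?_ ?_
  · intro x hx y hy h
    have hx' : s17lead P x = x := s17lead_of_mem_mins P hx
    have hy' : s17lead P y = y := s17lead_of_mem_mins P hy
    rw [← hx', ← hy']
    simp only [s17lead, h]
  · intro b hb
    obtain ⟨x, hx⟩ := P.nonempty_of_mem_parts hb
    have hbx : P.part x = b := P.part_eq_of_mem hb hx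
    refine ⟨s17lead P x, s17lead_mem_mins P x, ?_⟩
    show P.part (s17lead P x) = b
    rw [s17part_lead, hbx]

lemma s17parts_subset {m : ℕ} {P Q : Finpartition (univ : Finset (Fin m))}
    (h : s17lead P = s17lead Q) : P.parts ⊆ Q.parts := by
  intro b hb
  obtain ⟨x, hx⟩ := P.nonempty_of_mem_parts hb
  have hbx : P.part x = b := P.part_eq_of_mem hb hx
  have : P.part x = Q.part x := by
    ext y
    rw [s17mem_part_iff_lead, s17mem_part_iff_lead, h]
  rw [← hbx, this]
  exact Q.part_mem.2 (mem_univ x)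

lemma s17eq_of_lead_eq {m : ℕ} {P Q : Finpartition (univ : Finset (Fin m))}
    (h : s17lead P = s17lead Q) : P = Q := by
  ext1
  exact le_antisymm (s17parts_subset h) (s17parts_subset h.symm)

/-- The encoding of non-leaders: the `i`-th non-leader is sent to the rank of its leader. -/
noncomputable def s17g {m L : ℕ} (hL : 0 < L) (S : Finset (Fin m)) (h : Fin m → Fin m) :
    Fin (m - L) → Fin L := fun i =>
  if h1 : S.card = L then
    if h2 : Sᶜ.card = m - L then
      if hmem : h (Sᶜ.orderEmbOfFin h2 i) ∈ S then
        (S.orderIsoOfFin h1).symm ⟨h (Sᶜ.orderEmbOfFin h2 i), hmem⟩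
      else ⟨0, hL⟩
    else ⟨0, hL⟩
  else ⟨0, hL⟩

/-- the number of set partitions of an `m`-element set into exactly `L`
nonempty blocks, each of even cardinality, is at most `2^m · L^{m−L}`. -/
theorem stmt17 (m L : ℕ) (hm : 0 < m) (hL : 0 < L) (hLm : L ≤ m) :
    {P : Finpartition (Finset.univ : Finset (Fin m)) |
        P.parts.card = L ∧ ∀ b ∈ P.parts, Even b.card}.ncard
      ≤ 2 ^ m * L ^ (m - L) := by
  classical
  set f : Finpartition (univ : Finset (Fin m)) → Finset (Fin m) × (Fin (m - L) → Fin L) :=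
    fun P => (s17mins P, s17g hL (s17mins P) (s17lead P)) with hf
  have key : {P : Finpartition (Finset.univ : Finset (Fin m)) |
        P.parts.card = L ∧ ∀ b ∈ P.parts, Even b.card}.ncard
      ≤ (Set.univ : Set (Finset (Fin m) × (Fin (m - L) → Fin L))).ncard := by
    refine Set.ncard_le_ncard_of_injOn f (fun a _ => Set.mem_univ _) ?_ (Set.finite_univ)
    intro P hP Q hQ hfeq
    obtain ⟨hPL, -⟩ := hP
    obtain ⟨hQL, -⟩ := hQ
    have hS : s17mins Q = s17mins P := (congrArg Prod.fst hfeq).symm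
    have hg : s17g hL (s17mins P) (s17lead P) = s17g hL (s17mins P) (s17lead Q) := by
      have := congrArg Prod.snd hfeq
      simp only [hf] at this
      rwa [hS] at this
    have h1 : (s17mins P).card = L := by rw [s17mins_card, hPL]
    have h2 : ((s17mins P)ᶜ).card = m - L := by
      rw [Finset.card_compl, h1, Fintype.card_fin]
    apply s17eq_of_lead_eq
    funext x
    by_cases hx : x ∈ s17mins P
    · rw [s17lead_of_mem_mins P hx, s17lead_of_mem_mins Q (hS ▸ hx)]
    · set S := s17mins P
      set i : Fin (m - L) := (Sᶜ.orderIsoOfFin h2).symm ⟨x, Finset.mem_compl.2 hx⟩ with hi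
      have hxi : Sᶜ.orderEmbOfFin h2 i = x := by
        rw [← Finset.coe_orderIsoOfFin_apply, hi, OrderIso.apply_symm_apply]
      have hmP : s17lead P (Sᶜ.orderEmbOfFin h2 i) ∈ S := by
        rw [hxi]; exact s17lead_mem_mins P x
      have hmQ : s17lead Q (Sᶜ.orderEmbOfFin h2 i) ∈ S := by
        rw [hxi]; rw [← hS]; exact s17lead_mem_mins Q x
      have := congrFun hg i
      rw [s17g, s17g, dif_pos h1, dif_pos h2, dif_pos hmP, dif_pos h1, dif_pos h2,
        dif_pos hmQ] at this
      have h3 := (S.orderIsoOfFin h1).symm.injective this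
      have h4 : s17lead P (Sᶜ.orderEmbOfFin h2 i) = s17lead Q (Sᶜ.orderEmbOfFin h2 i) :=
        congrArg Subtype.val h3
      rwa [hxi] at h4
  refine key.trans ?_
  rw [Set.ncard_univ, Nat.card_eq_fintype_card, Fintype.card_prod, Fintype.card_finset,
    Fintype.card_fun]
  simp
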